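/- Let k ≥ 1 and m ≥ 2 be integers, let τ ∈ ℂ with v := Im τ ≥ √3/2, and let a₁, …, a_{m−1} be complex numbers. Then |∑_{r=0}^{k} (−1)^{k−r} · C(k,r) · ((−2k+r)_{k−r} / (4πv)^{k−r}) · ∑_{n=1}^{m−1} (−n)^r · a_n · e^{−2πinτ}| ≤ (m + k/(√3·π))^k · e^{2π(m−1)v} · ∑_{n=1}^{m−1} |a_n|, where C(k,r) is the binomial coefficient. -/

import Mathlib

open Real Polynomial

lemma poch_abs_le (M : ℝ) (hM : 0 ≤ M) :
    ∀ (j : ℕ) (x : ℂ), (∀ i : ℕ, i < j → ‖x + i‖ ≤ M) →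
      ‖(ascPochhammer ℂ j).eval x‖ ≤ M ^ j := by
  intro j
  induction j with
  | zero => intro x _; simp
  | succ n ih =>
    intro x h
    rw [ascPochhammer_succ_eval, norm_mul, pow_succ]
    exact mul_le_mul (ih x fun i hi => h i (hi.trans (Nat.lt_succ_self n)))
      (h n (Nat.lt_succ_self n)) (norm_nonneg _) (pow_nonneg hM n)

theorem stmt14 (k m : ℕ) (hk : 1 ≤ k) (hm : 2 ≤ m) (τ : ℂ)
    (hτ : Real.sqrt 3 / 2 ≤ τ.im) (a : ℕ → ℂ) :
    ‖∑ r ∈ Finset.range (k + 1),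
        (-1 : ℂ) ^ (k - r) * (k.choose r : ℂ) *
          ((ascPochhammer ℂ (k - r)).eval (-2 * (k : ℂ) + (r : ℂ)) /
            (4 * (π : ℂ) * (τ.im : ℂ)) ^ (k - r)) *
          ∑ n ∈ Finset.Icc 1 (m - 1),
            (-(n : ℂ)) ^ r * a n * Complex.exp (-2 * (π : ℂ) * Complex.I * (n : ℂ) * τ)‖ ≤
      ((m : ℝ) + (k : ℝ) / (Real.sqrt 3 * π)) ^ k * Real.exp (2 * π * ((m : ℝ) - 1) * τ.im) *
        ∑ n ∈ Finset.Icc 1 (m - 1), ‖a n‖ := by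
  set v := τ.im with hvdef
  have h3 : (0:ℝ) < Real.sqrt 3 := Real.sqrt_pos.mpr (by norm_num)
  have hv0 : 0 < v := lt_of_lt_of_le (by positivity) hτ
  have hπ : (0:ℝ) < π := Real.pi_pos
  set E : ℝ := Real.exp (2 * π * ((m : ℝ) - 1) * v) with hEdef
  set A : ℝ := ∑ n ∈ Finset.Icc 1 (m - 1), ‖a n‖ with hAdef
  have hA0 : 0 ≤ A := Finset.sum_nonneg fun n _ => norm_nonneg _
  have hE0 : 0 < E := Real.exp_pos _
  set q : ℝ := 2 * k / (4 * π * v) with hqdef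
  have hq0 : 0 ≤ q := by positivity
  -- bound on exponential factors
  have hexp : ∀ n : ℕ, n ∈ Finset.Icc 1 (m-1) →
      ‖Complex.exp (-2 * (π : ℂ) * Complex.I * (n : ℂ) * τ)‖ ≤ E := by
    intro n hn
    have hn' : (n:ℝ) ≤ (m:ℝ) - 1 := by
      have := (Finset.mem_Icc.mp hn).2
      have h2 : n ≤ m - 1 := this
      have : (n:ℝ) ≤ ((m-1 : ℕ) : ℝ) := Nat.cast_le.mpr h2
      rwa [Nat.cast_sub (by omega), Nat.cast_one] at this
    rw [Complex.norm_exp]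
    apply Real.exp_le_exp.mpr
    have hre : (-2 * (π : ℂ) * Complex.I * (n : ℂ) * τ).re = 2 * π * n * v := by
      simp [Complex.mul_re, Complex.mul_im, hvdef]
    rw [hre]
    have : 2 * π * (n:ℝ) ≤ 2 * π * ((m:ℝ) - 1) := by nlinarith
    nlinarith
  -- bound each term
  have hterm : ∀ r ∈ Finset.range (k+1),
      ‖(-1 : ℂ) ^ (k - r) * (k.choose r : ℂ) *
          ((ascPochhammer ℂ (k - r)).eval (-2 * (k : ℂ) + (r : ℂ)) /
            (4 * (π : ℂ) * (v : ℂ)) ^ (k - r)) *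
          ∑ n ∈ Finset.Icc 1 (m - 1),
            (-(n : ℂ)) ^ r * a n * Complex.exp (-2 * (π : ℂ) * Complex.I * (n : ℂ) * τ)‖ ≤
        ((m:ℝ) - 1) ^ r * q ^ (k - r) * (k.choose r : ℝ) * (E * A) := by
    intro r hr
    have hrk : r ≤ k := Nat.lt_succ_iff.mp (Finset.mem_range.mp hr)
    rw [norm_mul, norm_mul, norm_mul]
    have h1 : ‖(-1:ℂ)^(k-r)‖ = 1 := by
      rw [norm_pow]; simp
    rw [h1, one_mul]
    have hch : ‖(k.choose r : ℂ)‖ = (k.choose r : ℝ) := by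
      rw [← Complex.norm_natCast]
    -- pochhammer bound
    have hpoch : ‖(ascPochhammer ℂ (k - r)).eval (-2 * (k : ℂ) + (r : ℂ))‖ ≤
        (2*(k:ℝ)) ^ (k-r) := by
      apply poch_abs_le (2*(k:ℝ)) (by positivity)
      intro i hi
      have : (-2 * (k : ℂ) + (r : ℂ) + (i:ℂ)) = (((-2*(k:ℝ)+r+i : ℝ)) : ℂ) := by
        push_cast; ring
      rw [this, Complex.norm_real, Real.norm_eq_abs, abs_le]
      have hri : (r:ℝ) + i ≤ (k:ℝ) := by
        have : r + i < k := by omega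
        have := Nat.cast_le (α := ℝ).mpr this.le
        push_cast at this; linarith
      have hk0 : (0:ℝ) ≤ k := Nat.cast_nonneg _
      have hr0 : (0:ℝ) ≤ (r:ℝ) + i := by positivity
      constructor <;> nlinarith
    have hdenom : ‖(4 * (π : ℂ) * (v : ℂ)) ^ (k - r)‖ = (4*π*v)^(k-r) := by
      rw [norm_pow]
      congr 1
      have : (4 * (π : ℂ) * (v : ℂ)) = (((4*π*v : ℝ)) : ℂ) := by push_cast; ring
      rw [this, Complex.norm_real, Real.norm_eq_abs, abs_of_pos (by positivity)]
    have hpq : ‖(ascPochhammer ℂ (k - r)).eval (-2 * (k : ℂ) + (r : ℂ)) /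
            (4 * (π : ℂ) * (v : ℂ)) ^ (k - r)‖ ≤ q ^ (k-r) := by
      rw [norm_div, hdenom, div_le_iff₀ (by positivity), hqdef, div_pow, div_mul_eq_mul_div,
        le_div_iff₀ (by positivity)]
      calc ‖_‖ * (4*π*v)^(k-r) ≤ (2*(k:ℝ))^(k-r) * (4*π*v)^(k-r) := by
            apply mul_le_mul_of_nonneg_right hpoch (by positivity)
        _ = (2*(k:ℝ))^(k-r) * (4*π*v)^(k-r) := rfl
    -- inner sum bound
    have hinner : ‖∑ n ∈ Finset.Icc 1 (m - 1),
            (-(n : ℂ)) ^ r * a n * Complex.exp (-2 * (π : ℂ) * Complex.I * (n : ℂ) * τ)‖ ≤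
        ((m:ℝ)-1)^r * (E * A) := by
      calc ‖_‖ ≤ ∑ n ∈ Finset.Icc 1 (m-1), ‖(-(n : ℂ)) ^ r * a n * Complex.exp (-2 * (π : ℂ) * Complex.I * (n : ℂ) * τ)‖ :=
            norm_sum_le _ _
        _ ≤ ∑ n ∈ Finset.Icc 1 (m-1), ((m:ℝ)-1)^r * E * ‖a n‖ := by
            apply Finset.sum_le_sum
            intro n hn
            rw [norm_mul, norm_mul, norm_pow, norm_neg, Complex.norm_natCast]
            have hn' : (n:ℝ) ≤ (m:ℝ) - 1 := by
              have h2 : n ≤ m - 1 := (Finset.mem_Icc.mp hn).2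
              have : (n:ℝ) ≤ ((m-1 : ℕ) : ℝ) := Nat.cast_le.mpr h2
              rwa [Nat.cast_sub (by omega), Nat.cast_one] at this
            have hb1 : (n:ℝ)^r ≤ ((m:ℝ)-1)^r := pow_le_pow_left₀ (Nat.cast_nonneg n) hn' r
            have := hexp n hn
            have hm1 : (0:ℝ) ≤ (m:ℝ)-1 := by
              have : (2:ℝ) ≤ m := by exact_mod_cast hm
              linarith
            calc (n:ℝ)^r * ‖a n‖ * ‖Complex.exp _‖
                ≤ ((m:ℝ)-1)^r * ‖a n‖ * E := by
                  apply mul_le_mul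
                  · exact mul_le_mul_of_nonneg_right hb1 (norm_nonneg _)
                  · exact this
                  · exact norm_nonneg _
                  · positivity
              _ = ((m:ℝ)-1)^r * E * ‖a n‖ := by ring
        _ = ((m:ℝ)-1)^r * (E * A) := by
            rw [← Finset.mul_sum, ← hAdef]; ring
    rw [hch]
    calc (k.choose r : ℝ) * ‖_‖ * ‖_‖
        ≤ (k.choose r : ℝ) * q^(k-r) * (((m:ℝ)-1)^r * (E*A)) :=
          mul_le_mul (mul_le_mul_of_nonneg_left hpq (Nat.cast_nonneg _)) hinner
            (norm_nonneg _) (by positivity)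
      _ = ((m:ℝ) - 1) ^ r * q ^ (k - r) * (k.choose r : ℝ) * (E * A) := by ring
  -- assemble
  have hqle : q ≤ (k:ℝ) / (Real.sqrt 3 * π) := by
    have hden : 2 * Real.sqrt 3 * π ≤ 4 * π * v := by nlinarith
    have h1 : 2 * (k:ℝ) / (4 * π * v) ≤ 2 * (k:ℝ) / (2 * Real.sqrt 3 * π) :=
      div_le_div_of_nonneg_left (by positivity) (by positivity) hden
    have h2 : 2 * (k:ℝ) / (2 * Real.sqrt 3 * π) = (k:ℝ) / (Real.sqrt 3 * π) := by
      field_simp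
    rw [hqdef]; rw [h2] at h1; exact h1
  have hbase : ((m:ℝ) - 1) + q ≤ (m:ℝ) + (k:ℝ) / (Real.sqrt 3 * π) := by
    have : (m:ℝ) - 1 ≤ (m:ℝ) := by linarith
    linarith
  have hbase0 : 0 ≤ ((m:ℝ) - 1) + q := by
    have : (2:ℝ) ≤ m := by exact_mod_cast hm
    linarith
  calc ‖_‖ ≤ ∑ r ∈ Finset.range (k+1), ‖(-1 : ℂ) ^ (k - r) * (k.choose r : ℂ) *
          ((ascPochhammer ℂ (k - r)).eval (-2 * (k : ℂ) + (r : ℂ)) /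
            (4 * (π : ℂ) * (v : ℂ)) ^ (k - r)) *
          ∑ n ∈ Finset.Icc 1 (m - 1),
            (-(n : ℂ)) ^ r * a n * Complex.exp (-2 * (π : ℂ) * Complex.I * (n : ℂ) * τ)‖ :=
        norm_sum_le _ _
    _ ≤ ∑ r ∈ Finset.range (k+1),
          ((m:ℝ) - 1) ^ r * q ^ (k - r) * (k.choose r : ℝ) * (E * A) :=
        Finset.sum_le_sum hterm
    _ = (((m:ℝ) - 1) + q) ^ k * (E * A) := by
        rw [← Finset.sum_mul, ← add_pow]
    _ ≤ ((m : ℝ) + (k : ℝ) / (Real.sqrt 3 * π)) ^ k * (E * A) := by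
        apply mul_le_mul_of_nonneg_right _ (by positivity)
        exact pow_le_pow_left₀ hbase0 hbase k
    _ = ((m : ℝ) + (k : ℝ) / (Real.sqrt 3 * π)) ^ k * E * A := by ring
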